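/- Let x, y ∈ ℝ^d \ {0} with |x| ≤ |y| ≤ 2|x|, and suppose the cosine c_0 of the angle between −x and y − x satisfies c_0 ≤ −a for some a > 0. Then |y − x| ≤ (3/a)(|y| − |x|). -/

import Mathlib

/-- Let `x, y ∈ ℝ^d \ {0}` with `|x| ≤ |y| ≤ 2|x|`, and suppose the cosine
`c₀` of the angle between `−x` and `y − x` satisfies `c₀ ≤ −a` for some `a > 0` (equivalently
`⟪−x, y−x⟫ ≤ −a·|x|·|y−x|`).  Then `|y − x| ≤ (3/a)(|y| − |x|)`. -/
theorem stmt4 (d : ℕ) (x y : EuclideanSpace ℝ (Fin d)) (hx : x ≠ 0) (hy : y ≠ 0)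
    (h1 : ‖x‖ ≤ ‖y‖) (h2 : ‖y‖ ≤ 2 * ‖x‖) (a : ℝ) (ha : 0 < a)
    (hc : (inner ℝ (-x) (y - x) : ℝ) ≤ -a * (‖x‖ * ‖y - x‖)) :
    ‖y - x‖ ≤ (3 / a) * (‖y‖ - ‖x‖) := by
  have hx' : 0 < ‖x‖ := norm_pos_iff.mpr hx
  have hr : (0:ℝ) ≤ ‖y - x‖ := norm_nonneg _
  have key : ‖y‖^2 = ‖x‖^2 + 2 * (inner ℝ x (y - x) : ℝ) + ‖y - x‖^2 := by
    have h := norm_add_sq_real x (y - x)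
    simpa using h
  have hinner : (inner ℝ x (y - x) : ℝ) = -(inner ℝ (-x) (y - x) : ℝ) := by
    rw [inner_neg_left]; ring
  rw [div_mul_eq_mul_div, le_div_iff₀ ha]
  nlinarith [mul_pos hx' ha, sq_nonneg (‖y - x‖), mul_nonneg (mul_nonneg hx'.le ha.le) hr]
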